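/- Weight is a genuine monomial: let a ≥ 2 and m_1,…,m_a ≥ 1, set ℓ_b = m_1+⋯+m_b. For any (a−1)-species configuration σ ∈ S(m_1,…,m_{a−1}) on ℤ_L and any x ∈ B_{ℓ_a}, after completing the pairing procedure of the embedding rule exactly m_a dots remain uncolored; consequently there is at least one i ∈ ℤ_L with η_i = w_a, hence the product η_1⋯η_L is divisible by w_a and ϖ_x(σ) = w_a^{−1}η_1⋯η_L is a monomial w_1^{p_1}⋯w_a^{p_a} with all p_j ∈ ℤ_{≥0}. -/

import Mathlib

open scoped BigOperators

namespace ITAZRP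

/-- Cyclic successor on `Fin L` (site `i+1` on the periodic chain `ℤ_L`). -/
def cyc {L : ℕ} (i : Fin L) : Fin L := ⟨(i.val + 1) % L, Nat.mod_lt _ i.pos⟩

/-- Cyclic subtraction of a natural number on `Fin L`. -/
def csub {L : ℕ} (s : Fin L) (d : ℕ) : Fin L :=
  ⟨(s.val + (L - d % L)) % L, Nat.mod_lt _ s.pos⟩

/-- Multiplicity representation → multiset representation. -/
def toMul {m : ℕ} (α : Fin m → ℕ) : Multiset (Fin m) :=
  ∑ a : Fin m, Multiset.replicate (α a) a

/-- Multiset representation → multiplicity representation. -/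
def ofMul {m : ℕ} (s : Multiset (Fin m)) : Fin m → ℕ := fun a => s.count a

/-- The relation `(α,β) > (γ,δ)`: there is `k ∈ [1,r]` with
`γ = α ∪ {β_k,…,β_r}` and `δ = (β_1,…,β_{k-1})`; equivalently `β` splits as
`δ + t` with `t ≠ 0`, every element of `δ` below every element of `t`,
and `γ = α + t`. -/
def GtRel {m : ℕ} (α β γ δ : Multiset (Fin m)) : Prop :=
  ∃ t : Multiset (Fin m), t ≠ 0 ∧ β = δ + t ∧ γ = α + t ∧ ∀ x ∈ δ, ∀ y ∈ t, x ≤ y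

theorem GtRel.sub_nonempty {m : ℕ} {α β γ δ : Multiset (Fin m)} (h : GtRel α β γ δ) :
    (γ - α).toFinset.Nonempty := by
  obtain ⟨t, ht, -, hγ, -⟩ := h
  rw [hγ, add_tsub_cancel_left]
  exact Multiset.toFinset_nonempty.mpr ht

/-- Minimum of a nonempty multiset over `Fin m`. -/
def msetMin {m : ℕ} (t : Multiset (Fin m)) (h : t.toFinset.Nonempty) : Fin m :=
  t.toFinset.min' h

/-- `g(β) = w_1 β^1 + ⋯ + w_n β^n`. -/
noncomputable def gVal {m : ℕ} (w : Fin m → ℝ) (β : Multiset (Fin m)) : ℝ := (β.map w).sum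

open Classical in
/-- The transition rate `w_{min(γ∖α)}` when `(α,β) > (γ,δ)`, and `0` otherwise. -/
noncomputable def wRateM {m : ℕ} (w : Fin m → ℝ) (α β γ δ : Multiset (Fin m)) : ℝ :=
  if h : GtRel α β γ δ then w (msetMin (γ - α) h.sub_nonempty) else 0

open Classical in
/-- The local Markov matrix entry `h^{γ,δ}_{α,β}` in multiset representation. -/
noncomputable def hEntM {m : ℕ} (w : Fin m → ℝ) (α β γ δ : Multiset (Fin m)) : ℝ :=
  if h : GtRel α β γ δ then w (msetMin (γ - α) h.sub_nonempty)
  else if α = γ ∧ β = δ then -(gVal w β) else 0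

/-- The local Markov matrix entry `h^{γ,δ}_{α,β}` in multiplicity representation. -/
noncomputable def hEnt {m : ℕ} (w : Fin m → ℝ) (α β γ δ : Fin m → ℕ) : ℝ :=
  hEntM w (toMul α) (toMul β) (toMul γ) (toMul δ)


/-- Product of two (possibly infinite) matrices, entries summed by `tsum`. -/
noncomputable def matMul {ι : Type*} (X Y : ι → ι → ℝ) : ι → ι → ℝ :=
  fun s t => ∑' u, X s u * Y u t

/-- Trace of a (possibly infinite) matrix, summed by `tsum`. -/
noncomputable def matTrace {ι : Type*} (X : ι → ι → ℝ) : ℝ := ∑' s, X s s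

open Classical in
/-- Ordered product `f 0 * f 1 * ⋯ * f (L-1)` of matrices. -/
noncomputable def matProd {ι : Type*} : (L : ℕ) → (Fin L → (ι → ι → ℝ)) → (ι → ι → ℝ)
  | 0, _ => fun s t => if s = t then 1 else 0
  | (L + 1), f => matMul (f 0) (matProd L fun i => f i.succ)

/-- The diagonal part `Σ_{r=1}^{n-1} θ(α^{r+1} = ⋯ = α^n = 0) ρ_r K_r + ρ_n K_n`
of the operator `A`, evaluated at the Fock basis vector labelled `u`;
here `ρ` is the rate attached to each `K_r`. -/
noncomputable def Dval (Nm : ℕ) (ρ : Fin (Nm + 1) → ℝ) (α : Fin (Nm + 1) → ℕ)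
    (u : Fin Nm → ℕ) : ℝ :=
  (∑ r : Fin Nm,
      if (∀ b : Fin (Nm + 1), (r : ℕ) < (b : ℕ) → α b = 0) ∧
          (∀ j : Fin Nm, j < r → u j = 0) ∧ u r ≠ 0
      then ρ r.castSucc else 0)
    + (if ∀ j, u j = 0 then ρ (Fin.last Nm) else 0)

open Classical in
/-- Matrix entries of `P_+(μ) (Σ_r θ(⋯) ρ_r K_r + ρ_n K_n) P_-(ᾱ)`
on `F^{⊗ Nm}` (where `n = Nm + 1`). -/
noncomputable def AentGen (Nm : ℕ) (ρ : Fin (Nm + 1) → ℝ) (μ : Fin Nm → ℕ)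
    (α : Fin (Nm + 1) → ℕ) : (Fin Nm → ℕ) → (Fin Nm → ℕ) → ℝ :=
  fun s t =>
    if (∀ j, μ j ≤ s j) ∧ (∀ j, t j = s j - μ j + α j.castSucc)
    then Dval Nm ρ α (fun j => s j - μ j) else 0

/-- Matrix entries of the operator `A^{(n)}_{μ,α}` with `n = Nm + 1`. -/
noncomputable def Aent (Nm : ℕ) (w : Fin (Nm + 1) → ℝ) (μ : Fin Nm → ℕ)
    (α : Fin (Nm + 1) → ℕ) : (Fin Nm → ℕ) → (Fin Nm → ℕ) → ℝ :=
  AentGen Nm w μ α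

/-- Matrix entries of the operator `Â^{(n)}_{μ,α}` with `n = Nm + 1`:
the rate `w_r` is replaced by `w_r (w_r + g(α))`. -/
noncomputable def AhatEnt (Nm : ℕ) (w : Fin (Nm + 1) → ℝ) (μ : Fin Nm → ℕ)
    (α : Fin (Nm + 1) → ℕ) : (Fin Nm → ℕ) → (Fin Nm → ℕ) → ℝ :=
  AentGen Nm (fun r => w r * (w r + gVal w (toMul α))) μ α

/-- Index set of the Fock space `F^{⊗ n(n-1)/2}` (`n = N+1`), split into blocks of
sizes `1, 2, …, N`: block `a` carries the factor `F^{⊗ (a+1)}` on which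
`A^{(a+2)}` acts. -/
abbrev BigIdx (N : ℕ) := (a : Fin N) → (Fin (a.val + 1) → ℕ)

/-- Extend a tuple `(μ^{(1)}, …, μ^{(N)})` by `μ^{(N+1)} := σ`. -/
def mextend (N : ℕ) (μ : BigIdx N) (σ : Fin (N + 1) → ℕ) :
    (k : Fin (N + 1)) → Fin (k.val + 1) → ℕ :=
  fun k j => if h : (k : ℕ) < N then μ ⟨k, h⟩ j
    else σ (Fin.castLE (Nat.succ_le_of_lt k.isLt) j)

/-- Matrix entries of
`X_σ = Σ_{μ^{(1)},…,μ^{(N)}} A^{(2)}_{μ^{(1)},μ^{(2)}} ⊗ ⋯ ⊗ A^{(N+1)}_{μ^{(N)},σ}`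
acting on `F^{⊗ N(N+1)/2}` (with `n = N + 1` species). -/
noncomputable def Xent (N : ℕ) (w : Fin (N + 1) → ℝ) (σ : Fin (N + 1) → ℕ) :
    BigIdx N → BigIdx N → ℝ :=
  fun s t => ∑' μ : BigIdx N, ∏ a : Fin N,
    Aent (a.val + 1) (fun b => w (Fin.castLE (Nat.succ_le_succ a.isLt) b))
      (mextend N μ σ ⟨a.val, Nat.lt_succ_of_lt a.isLt⟩)
      (mextend N μ σ ⟨a.val + 1, Nat.succ_lt_succ a.isLt⟩)
      (s a) (t a)

/-- A configuration of the `m`-species process on the periodic chain `ℤ_L`. -/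
abbrev Config (L m : ℕ) := Fin L → (Fin m → ℕ)

/-- Membership in the sector `S(mm)`: the total multiplicity of each species is `mm`. -/
def inSector {L m : ℕ} (σ : Config L m) (mm : Fin m → ℕ) : Prop :=
  ∀ a, (∑ i, σ i a) = mm a

/-- Replace the local states at the cyclically adjacent sites `i, i+1` by `a, b`. -/
def update2 {L m : ℕ} (σ : Config L m) (i : Fin L) (a b : Fin m → ℕ) : Config L m :=
  fun j => if j = i then a else if j = cyc i then b else σ j

/-- The left hand side
`Σ_{i ∈ ℤ_L} Σ_{σ'_i, σ'_{i+1}} h^{σ_i,σ_{i+1}}_{σ'_i,σ'_{i+1}} P(σ_1,…,σ'_i,σ'_{i+1},…,σ_L)`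
of the stationarity equation. -/
noncomputable def stationaryTerm {L m : ℕ} (w : Fin m → ℝ) (P : Config L m → ℝ)
    (σ : Config L m) : ℝ :=
  ∑ i : Fin L, ∑' p : (Fin m → ℕ) × (Fin m → ℕ),
    hEnt w p.1 p.2 (σ i) (σ (cyc i)) * P (update2 σ i p.1 p.2)

/-- `P` satisfies the stationarity (steady state) equation on the sector `S(mm)`. -/
def IsStationary {L m : ℕ} (w : Fin m → ℝ) (P : Config L m → ℝ) (mm : Fin m → ℕ) : Prop :=
  ∀ σ : Config L m, inSector σ mm → stationaryTerm w P σ = 0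

/-- `ℓ_a = m_1 + ⋯ + m_a`. -/
def ell {m : ℕ} (mm : Fin m → ℕ) (a : Fin m) : ℕ :=
  ∑ b : Fin m, if b ≤ a then mm b else 0

/-- The family `Q` of polynomials in `w_1,…,w_m` is *the* steady state probability of the
`m`-species iTAZRP in the sector `S(mm)`: it satisfies the stationarity equation for all
positive rates, is homogeneous of degree `(m-1)(L-1)` with coefficients in `ℤ_{≥0}`, and its
values at `w_1 = ⋯ = w_m = 1` sum to `Π_a C(L-1+ℓ_a, ℓ_a)` over the sector. -/
noncomputable def IsSteadyState (L m : ℕ) (mm : Fin m → ℕ)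
    (Q : Config L m → MvPolynomial (Fin m) ℝ) : Prop :=
  (∀ w : Fin m → ℝ, (∀ a, 0 < w a) →
      IsStationary w (fun τ => MvPolynomial.eval w (Q τ)) mm)
  ∧ (∀ τ : Config L m, inSector τ mm → (Q τ).IsHomogeneous ((m - 1) * (L - 1)))
  ∧ (∀ τ : Config L m, inSector τ mm → ∀ d : (Fin m) →₀ ℕ, ∃ c : ℕ, (Q τ).coeff d = (c : ℝ))
  ∧ (∑' τ : {τ : Config L m // inSector τ mm},
        MvPolynomial.eval (fun _ => (1 : ℝ)) (Q τ.val))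
      = ∏ a : Fin m, ((L - 1 + ell mm a).choose (ell mm a) : ℝ)

/-- The vector `h_{i,i+1} |σ⟩ = Σ_{γ,δ} h^{γ,δ}_{σ_i,σ_{i+1}} |…,γ,δ,…⟩`, the target pairs
`(γ,δ)` being enumerated by the splitting position `k` of the sorted word of `σ_{i+1}`. -/
noncomputable def hLocAction {L : ℕ} (N : ℕ) (w : Fin (N + 1) → ℝ)
    (σ : Config L (N + 1)) (i : Fin L) : (Config L (N + 1)) →₀ ℝ :=
  (∑ k ∈ Finset.range ((toMul (σ (cyc i))).sort (· ≤ ·)).length,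
      w (((toMul (σ (cyc i))).sort (· ≤ ·)).getD k 0) •
        Finsupp.single
          (update2 σ i
            (ofMul (toMul (σ i) + ↑(((toMul (σ (cyc i))).sort (· ≤ ·)).drop k)))
            (ofMul (↑(((toMul (σ (cyc i))).sort (· ≤ ·)).take k))))
          (1 : ℝ))
    - gVal w (toMul (σ (cyc i))) • Finsupp.single σ (1 : ℝ)

/-- The Markov matrix `H = Σ_{i ∈ ℤ_L} h_{i,i+1}` as a linear endomorphism of the
free vector space on the set of configurations. -/
noncomputable def Hop (N L : ℕ) (w : Fin (N + 1) → ℝ) :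
    ((Config L (N + 1)) →₀ ℝ) →ₗ[ℝ] ((Config L (N + 1)) →₀ ℝ) :=
  Finsupp.linearCombination ℝ (fun σ => ∑ i : Fin L, hLocAction N w σ i)

/-- The cyclic shift `C : |σ_1,…,σ_L⟩ ↦ |σ_L,σ_1,…,σ_{L-1}⟩`. -/
noncomputable def Cop (N L : ℕ) :
    ((Config L (N + 1)) →₀ ℝ) →ₗ[ℝ] ((Config L (N + 1)) →₀ ℝ) :=
  Finsupp.lmapDomain ℝ ℝ (fun σ : Config L (N + 1) => fun j => σ (csub j 1))

/-- The state of the pairing procedure of the TAZRP embedding rule: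
`u j` = number of yet uncolored dots in bottom box `j`;
`done j` = colors of the colored dots in bottom box `j`;
`cross i` = colors of the H-lines crossing the border between bottom boxes `i` and `i+1`. -/
structure PairState (L n : ℕ) where
  u : Fin L → ℕ
  done : Fin L → Multiset (Fin n)
  cross : Fin L → Multiset (Fin n)

open Classical in
/-- Process one species-`c` particle sitting in top box `p`: its H-line starts at the
left adjacent bottom box `p-1` and proceeds left (cyclically) until it first meets a box
with an uncolored dot, which it colors; the borders it crosses are recorded. -/
noncomputable def step {L n : ℕ} (st : PairState L n) (c : Fin n) (p : Fin L) : PairState L n :=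
  match (List.range L).find? (fun d => decide (0 < st.u (csub (csub p 1) d))) with
  | none => st
  | some d =>
      { u := Function.update st.u (csub (csub p 1) d) (st.u (csub (csub p 1) d) - 1)
        done := Function.update st.done (csub (csub p 1) d) (c ::ₘ st.done (csub (csub p 1) d))
        cross := fun j =>
          if ∃ e ∈ Finset.Icc 1 d, j = csub (csub p 1) e then c ::ₘ st.cross j
          else st.cross j }

/-- The particles of the top row, listed species by species in increasing order. -/
def particleList {L : ℕ} (n : ℕ) (σ : Fin L → Multiset (Fin n)) : List (Fin n × Fin L) :=
  (List.finRange n).flatMap fun b =>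
    (List.finRange L).flatMap fun i => List.replicate ((σ i).count b) (b, i)

/-- Run the whole pairing procedure of the embedding rule for the multiline row `x`
(the dots) below the configuration `σ` (the particles). -/
noncomputable def runPairing {L n : ℕ} (x : Fin L → ℕ) (σ : Fin L → Multiset (Fin n)) : PairState L n :=
  (particleList n σ).foldl (fun st bp => step st bp.1 bp.2) ⟨x, fun _ => 0, fun _ => 0⟩

/-- The TAZRP embedding rule `Φ_x(σ)`: colored dots keep their color, remaining
uncolored dots become particles of species `a`. -/
noncomputable def PhiAt {L n : ℕ} (a : Fin n) (x : Fin L → ℕ) (σ : Fin L → Multiset (Fin n)) :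
    Fin L → Multiset (Fin n) :=
  fun j => (runPairing x σ).done j + Multiset.replicate ((runPairing x σ).u j) a

/-- The factor `η_i`: `w_a` if no H-line crosses the border between bottom boxes `i` and
`i+1`, and `w_{min(col_i)}` otherwise. -/
noncomputable def etaAt {L n : ℕ} (a : Fin n) (w : Fin n → ℝ) (x : Fin L → ℕ)
    (σ : Fin L → Multiset (Fin n)) (i : Fin L) : ℝ :=
  if h : (runPairing x σ).cross i = 0 then w a
  else w (msetMin ((runPairing x σ).cross i) (Multiset.toFinset_nonempty.mpr h))

/-- The product `η_1 ⋯ η_L`. -/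
noncomputable def etaProd {L n : ℕ} (a : Fin n) (w : Fin n → ℝ) (x : Fin L → ℕ)
    (σ : Fin L → Multiset (Fin n)) : ℝ :=
  ∏ i : Fin L, etaAt a w x σ i

/-- `ϖ_x(σ) = w_a^{-1} η_1 ⋯ η_L`. -/
noncomputable def varpiAt {L n : ℕ} (a : Fin n) (w : Fin n → ℝ) (x : Fin L → ℕ)
    (σ : Fin L → Multiset (Fin n)) : ℝ :=
  (w a)⁻¹ * etaProd a w x σ

/-- The tower `σ^1, σ^2, …` of configurations: `σ^1` is the 1-species configuration given
by `x^1`, and `σ^{a} = Φ_{x^{a}}(σ^{a-1})` (indices `0,…,N` in Lean). -/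
noncomputable def sigmaSeq {L : ℕ} (N : ℕ) (x : Fin (N + 1) → Fin L → ℕ) :
    ℕ → (Fin L → Multiset (Fin (N + 1)))
  | 0 => fun i => Multiset.replicate (x 0 i) (0 : Fin (N + 1))
  | (k + 1) =>
      if h : k + 1 < N + 1 then
        PhiAt (⟨k + 1, h⟩ : Fin (N + 1)) (x ⟨k + 1, h⟩) (sigmaSeq N x k)
      else sigmaSeq N x k

/-- The projection `π : B(m) → S(m)`, `π(x) = σ^n`. -/
noncomputable def piMap {L : ℕ} (N : ℕ) (x : Fin (N + 1) → Fin L → ℕ) : Config L (N + 1) :=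
  fun i => ofMul (sigmaSeq N x N i)

/-- The weight `W(x) = Π_{a=2}^n ϖ_{x^a}(σ^{a-1})`. -/
noncomputable def Wweight {L : ℕ} (N : ℕ) (w : Fin (N + 1) → ℝ)
    (x : Fin (N + 1) → Fin L → ℕ) : ℝ :=
  ∏ r : Fin N, varpiAt r.succ w (x r.succ) (sigmaSeq N x r.val)

open Classical in
/-- The local Markov matrix entry `h^{γ,δ}_{α,β}` for the single species (`n = 1`) TAZRP,
where a local state is just the number of particles occupying the site. -/
noncomputable def h1 (w1 : ℝ) (α β γ δ : ℕ) : ℝ :=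
  if ∃ k, 1 ≤ k ∧ k ≤ β ∧ γ = α + β - k + 1 ∧ δ = k - 1 then w1
  else if α = γ ∧ β = δ then -(w1 * β) else 0



/-! ### Auxiliary lemmas for the pairing procedure -/

section PairingLemmas

open Fin.NatCast Fin.CommRing in
lemma csub_eq' {L : ℕ} [NeZero L] (s : Fin L) (d : ℕ) : csub s d = s - (d : Fin L) := by
  simp only [csub, Fin.sub_def, Fin.ext_iff, Fin.val_natCast]
  rw [Nat.add_comm]

open Fin.NatCast Fin.CommRing in
lemma exists_csub' {L : ℕ} [NeZero L] (s j : Fin L) : ∃ d < L, csub s d = j :=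
  ⟨(s - j).val, (s - j).isLt, by rw [csub_eq', Fin.cast_val_eq_self]; ring⟩

open Fin.NatCast Fin.CommRing in
lemma csub_pred' {L : ℕ} [NeZero L] (s j : Fin L) (e : ℕ) (he : 1 ≤ e)
    (h : csub s e = csub j 1) : csub s (e - 1) = j := by
  rw [csub_eq' s, csub_eq' j] at h
  rw [csub_eq', Nat.cast_sub he]
  push_cast at h ⊢
  linear_combination h

variable {L n : ℕ}

lemma step_eq_none' (st : PairState L n) (c : Fin n) (p : Fin L)
    (hf : (List.range L).find? (fun d => decide (0 < st.u (csub (csub p 1) d))) = none) :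
    step st c p = st := by unfold step; rw [hf]

open Classical in
lemma step_eq_some' (st : PairState L n) (c : Fin n) (p : Fin L) (d : ℕ)
    (hf : (List.range L).find? (fun d => decide (0 < st.u (csub (csub p 1) d))) = some d) :
    step st c p =
      { u := Function.update st.u (csub (csub p 1) d) (st.u (csub (csub p 1) d) - 1)
        done := Function.update st.done (csub (csub p 1) d) (c ::ₘ st.done (csub (csub p 1) d))
        cross := fun j =>
          if ∃ e ∈ Finset.Icc 1 d, j = csub (csub p 1) e then c ::ₘ st.cross j
          else st.cross j } := by unfold step; rw [hf]

lemma find?_isSome_of_pos' [NeZero L] (st : PairState L n) (p : Fin L)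
    (h : ∃ j, 0 < st.u j) :
    ∃ d, (List.range L).find? (fun d => decide (0 < st.u (csub (csub p 1) d))) = some d := by
  obtain ⟨j, hj⟩ := h
  obtain ⟨d, hd, hcs⟩ := exists_csub' (csub p 1) j
  cases hf : (List.range L).find? (fun d => decide (0 < st.u (csub (csub p 1) d))) with
  | none =>
      rw [List.find?_range_eq_none] at hf
      have := hf d hd
      simp [hcs] at this
      omega
  | some d' => exact ⟨d', rfl⟩

lemma step_u_le' (st : PairState L n) (c : Fin n) (p : Fin L) (j : Fin L) :
    (step st c p).u j ≤ st.u j := by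
  cases hf : (List.range L).find? (fun d => decide (0 < st.u (csub (csub p 1) d))) with
  | none => rw [step_eq_none' st c p hf]
  | some d =>
      rw [step_eq_some' st c p d hf]
      dsimp only
      rcases eq_or_ne j (csub (csub p 1) d) with h | h
      · subst h; rw [Function.update_self]; omega
      · rw [Function.update_of_ne h]

lemma step_sum' [NeZero L] (st : PairState L n) (c : Fin n) (p : Fin L)
    (h : ∃ j, 0 < st.u j) :
    ∑ j, (step st c p).u j + 1 = ∑ j, st.u j := by
  obtain ⟨d, hf⟩ := find?_isSome_of_pos' st p h
  have hpos : 0 < st.u (csub (csub p 1) d) := by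
    have := List.find?_some hf
    simpa using this
  rw [step_eq_some' st c p d hf]
  dsimp only
  rw [Finset.sum_update_of_mem (Finset.mem_univ _),
    Finset.sum_eq_sum_sdiff_singleton_add (Finset.mem_univ (csub (csub p 1) d)) st.u]
  omega

lemma step_cross' (st : PairState L n) (c : Fin n) (p : Fin L) (j : Fin L)
    (hj : 0 < (step st c p).u j) :
    (step st c p).cross (csub j 1) = st.cross (csub j 1) := by
  cases hf : (List.range L).find? (fun d => decide (0 < st.u (csub (csub p 1) d))) with
  | none => rw [step_eq_none' st c p hf]
  | some d =>
      haveI : NeZero L := ⟨p.pos.ne'⟩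
      have huj : 0 < st.u j := lt_of_lt_of_le hj (step_u_le' st c p j)
      rw [step_eq_some' st c p d hf]
      dsimp only
      rw [if_neg]
      rintro ⟨e, he, hcs⟩
      rw [Finset.mem_Icc] at he
      have hj' : csub (csub p 1) (e - 1) = j := csub_pred' _ _ _ he.1 hcs.symm
      have hmin := List.find?_range_eq_some.mp hf
      have := hmin.2.2 (e - 1) (by omega)
      rw [hj'] at this
      simp at this
      omega

lemma foldl_u_le' (l : List (Fin n × Fin L)) (st : PairState L n) (j : Fin L) :
    (l.foldl (fun st bp => step st bp.1 bp.2) st).u j ≤ st.u j := by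
  induction l generalizing st with
  | nil => exact le_refl _
  | cons a l ih =>
      exact le_trans (ih (step st a.1 a.2)) (step_u_le' st a.1 a.2 j)

lemma foldl_sum' [NeZero L] (l : List (Fin n × Fin L)) (st : PairState L n)
    (h : l.length ≤ ∑ j, st.u j) :
    ∑ j, (l.foldl (fun st bp => step st bp.1 bp.2) st).u j + l.length = ∑ j, st.u j := by
  induction l generalizing st with
  | nil => simp
  | cons a l ih =>
      simp only [List.length_cons, List.foldl_cons] at *
      have hex : ∃ j, 0 < st.u j := by
        by_contra hc
        push_neg at hc
        have : ∑ j, st.u j = 0 := Finset.sum_eq_zero fun j _ => by have := hc j; omega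
        omega
      have h1 := step_sum' st a.1 a.2 hex
      have h2 := ih (step st a.1 a.2) (by omega)
      omega

lemma foldl_cross' (l : List (Fin n × Fin L)) (st : PairState L n) (j : Fin L)
    (hj : 0 < (l.foldl (fun st bp => step st bp.1 bp.2) st).u j) :
    (l.foldl (fun st bp => step st bp.1 bp.2) st).cross (csub j 1)
      = st.cross (csub j 1) := by
  induction l generalizing st with
  | nil => rfl
  | cons a l ih =>
      simp only [List.foldl_cons] at *
      have h1 : 0 < (step st a.1 a.2).u j := lt_of_lt_of_le hj (foldl_u_le' l _ j)
      rw [ih (step st a.1 a.2) hj, step_cross' st a.1 a.2 j h1]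

lemma length_particleList' (σ : Fin L → Multiset (Fin n)) :
    (particleList n σ).length = ∑ b : Fin n, ∑ i : Fin L, (σ i).count b := by
  simp [particleList, List.length_flatMap, Fin.sum_univ_def, List.map_map, Function.comp_def]

open Classical in
/-- The color of border `i`: `a` if no H-line crosses it, else the minimal crossing color. -/
noncomputable def colorAt {L n : ℕ} (a : Fin n) (x : Fin L → ℕ)
    (σ : Fin L → Multiset (Fin n)) (i : Fin L) : Fin n :=
  if h : (runPairing x σ).cross i = 0 then a
  else msetMin ((runPairing x σ).cross i) (Multiset.toFinset_nonempty.mpr h)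

lemma etaAt_eq_colorAt {L n : ℕ} (a : Fin n) (w : Fin n → ℝ) (x : Fin L → ℕ)
    (σ : Fin L → Multiset (Fin n)) (i : Fin L) :
    etaAt a w x σ i = w (colorAt a x σ i) := by
  rw [etaAt, colorAt, apply_dite w]

end PairingLemmas

/-- Remark 4.2 (ii).  Let `a = A+1 ≥ 2` and `m_1,…,m_a ≥ 1`.  For an
`(a-1)`-species configuration `σ ∈ S(m_1,…,m_{a-1})` on `ℤ_L` and a multiline row
`x ∈ B_{ℓ_a}`, after the pairing procedure exactly `m_a` dots remain uncolored; hence some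
border carries no H-line (so `η_i = w_a` there), the product `η_1⋯η_L` is divisible by
`w_a`, and `ϖ_x(σ) = w_a^{-1} η_1⋯η_L` is a genuine monomial `w_1^{p_1}⋯w_a^{p_a}` with
nonnegative integer exponents. -/
theorem weight_is_monomial (A L : ℕ) (hA : 1 ≤ A) (hL : 1 ≤ L)
    (m : Fin (A + 1) → ℕ) (hm : ∀ b, 1 ≤ m b)
    (σ : Fin L → Multiset (Fin (A + 1)))
    (hσtop : ∀ i, ∀ c ∈ σ i, c ≠ Fin.last A)
    (hσ : ∀ b : Fin (A + 1), b ≠ Fin.last A → (∑ i, (σ i).count b) = m b)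
    (x : Fin L → ℕ) (hx : (∑ i, x i) = ∑ b, m b) :
    (∑ j, (runPairing x σ).u j) = m (Fin.last A) ∧
    (∃ i, (runPairing x σ).cross i = 0) ∧
    (∃ p : Fin (A + 1) → ℕ, ∀ w : Fin (A + 1) → ℝ, (∀ b, 0 < w b) →
        etaProd (Fin.last A) w x σ = w (Fin.last A) * ∏ b, w b ^ p b ∧
        varpiAt (Fin.last A) w x σ = ∏ b, w b ^ p b) := by

  haveI : NeZero L := ⟨by omega⟩
  classical
  have hcount : ∀ b : Fin (A + 1),
      (∑ i, (σ i).count b) = if b = Fin.last A then 0 else m b := by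
    intro b
    by_cases hb : b = Fin.last A
    · subst hb
      simp only [if_pos rfl]
      exact Finset.sum_eq_zero fun i _ =>
        Multiset.count_eq_zero.mpr fun hc => hσtop i _ hc rfl
    · rw [if_neg hb]; exact hσ b hb
  have hlen : (particleList (A + 1) σ).length + m (Fin.last A) = ∑ b, m b := by
    rw [length_particleList', Finset.sum_congr rfl fun b _ => hcount b]
    have h1 : (∑ b : Fin (A + 1), if b = Fin.last A then 0 else m b)
        + (∑ b : Fin (A + 1), if b = Fin.last A then m b else 0)
        = ∑ b, m b := by
      rw [← Finset.sum_add_distrib]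
      refine Finset.sum_congr rfl fun b _ => ?_
      split_ifs with h <;> simp [h]
    have h2 : (∑ b : Fin (A + 1), if b = Fin.last A then m b else 0) = m (Fin.last A) := by
      simp [Finset.sum_ite_eq' Finset.univ (Fin.last A) m]
    omega
  have part1 : (∑ j, (runPairing x σ).u j) = m (Fin.last A) := by
    have hfold := foldl_sum' (particleList (A + 1) σ)
      (⟨x, fun _ => 0, fun _ => 0⟩ : PairState L (A + 1))
      (by
        show (particleList (A + 1) σ).length ≤ ∑ j, x j
        rw [hx]
        have := hm (Fin.last A)
        omega)
    have hxx : ∑ j, (⟨x, fun _ => 0, fun _ => 0⟩ : PairState L (A + 1)).u j = ∑ b, m b := hx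
    have hrun : ∑ j, (runPairing x σ).u j
        = ∑ j, ((particleList (A + 1) σ).foldl (fun st bp => step st bp.1 bp.2)
            (⟨x, fun _ => 0, fun _ => 0⟩ : PairState L (A + 1))).u j := rfl
    rw [hrun]
    omega
  refine ⟨part1, ?_, ?_⟩
  · have hexj : ∃ j, 0 < (runPairing x σ).u j := by
      by_contra hc
      push_neg at hc
      have h0 : ∑ j, (runPairing x σ).u j = 0 :=
        Finset.sum_eq_zero fun j _ => by have := hc j; omega
      have := hm (Fin.last A)
      omega
    obtain ⟨j, hj⟩ := hexj
    refine ⟨csub j 1, ?_⟩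
    have := foldl_cross' (particleList (A + 1) σ)
      (⟨x, fun _ => 0, fun _ => 0⟩ : PairState L (A + 1)) j hj
    exact this
  · refine ⟨fun b => (Finset.univ.filter fun i => colorAt (Fin.last A) x σ i = b).card
      - (if b = Fin.last A then 1 else 0), ?_⟩
    intro w hw
    have hexj : ∃ j, 0 < (runPairing x σ).u j := by
      by_contra hc
      push_neg at hc
      have h0 : ∑ j, (runPairing x σ).u j = 0 :=
        Finset.sum_eq_zero fun j _ => by have := hc j; omega
      have := hm (Fin.last A)
      omega
    obtain ⟨j, hj⟩ := hexj
    have hcr0 : (runPairing x σ).cross (csub j 1) = 0 :=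
      foldl_cross' (particleList (A + 1) σ)
        (⟨x, fun _ => 0, fun _ => 0⟩ : PairState L (A + 1)) j hj
    have hlastcard :
        1 ≤ (Finset.univ.filter fun i => colorAt (Fin.last A) x σ i = Fin.last A).card := by
      refine Finset.card_pos.mpr ⟨csub j 1, Finset.mem_filter.mpr ⟨Finset.mem_univ _, ?_⟩⟩
      rw [colorAt, dif_pos hcr0]
    have hfiber : etaProd (Fin.last A) w x σ
        = ∏ b, w b ^ (Finset.univ.filter fun i => colorAt (Fin.last A) x σ i = b).card := by
      rw [etaProd]
      simp_rw [etaAt_eq_colorAt]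
      rw [← Finset.prod_fiberwise Finset.univ (colorAt (Fin.last A) x σ)
        (fun i => w (colorAt (Fin.last A) x σ i))]
      refine Finset.prod_congr rfl fun b _ => ?_
      rw [Finset.prod_congr rfl (fun i hi => ?_), Finset.prod_const]
      rw [(Finset.mem_filter.mp hi).2]
    have hcards : ∀ b, (Finset.univ.filter fun i => colorAt (Fin.last A) x σ i = b).card
        = ((Finset.univ.filter fun i => colorAt (Fin.last A) x σ i = b).card
            - (if b = Fin.last A then 1 else 0)) + (if b = Fin.last A then 1 else 0) := by
      intro b
      split_ifs with h
      · subst h; omega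
      · omega
    have heta : etaProd (Fin.last A) w x σ = w (Fin.last A) *
        ∏ b, w b ^ ((Finset.univ.filter fun i => colorAt (Fin.last A) x σ i = b).card
          - (if b = Fin.last A then 1 else 0)) := by
      rw [hfiber]
      rw [Finset.prod_congr rfl fun b _ => by rw [hcards b, pow_add],
        Finset.prod_mul_distrib]
      have hone : (∏ b : Fin (A + 1), w b ^ (if b = Fin.last A then 1 else 0))
          = w (Fin.last A) := by
        simp [pow_ite, Finset.prod_ite_eq' Finset.univ (Fin.last A) w]
      rw [hone, mul_comm]
    refine ⟨heta, ?_⟩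
    rw [varpiAt, heta, inv_mul_cancel_left₀ (ne_of_gt (hw (Fin.last A)))]

end ITAZRP
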